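/- The r-dimensional Lebesgue volume of the zonotope Z_A equals the number of bases of A, i.e., vol(Z_A) = |{B ⊆ E : |B| = r and the columns {A_e : e ∈ B} form a basis of ℝ^r}|. (Equivalently, vol(Z_A) = T_M(1,1), the number of bases of the regular matroid M.) -/

import Mathlib

open Matrix MeasureTheory Set Pointwise

noncomputable section
namespace ZonoVol

set_option linter.unusedVariables false
set_option linter.unusedSectionVars false
set_option maxHeartbeats 1000000

def cube (m : ℕ) : Set (Fin m → ℝ) := Set.univ.pi fun _ => Set.Icc (0:ℝ) 1

def Zono {r m : ℕ} (A : Matrix (Fin r) (Fin m) ℝ) : Set (Fin r → ℝ) :=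
  A.mulVec '' cube m

lemma convex_cube (m : ℕ) : Convex ℝ (cube m) := convex_pi fun _ _ => convex_Icc 0 1

lemma isCompact_cube (m : ℕ) : IsCompact (cube m) := isCompact_univ_pi fun _ => isCompact_Icc

lemma continuous_mulVec {r m : ℕ} (A : Matrix (Fin r) (Fin m) ℝ) :
    Continuous A.mulVec := by
  have : A.mulVec = A.mulVecLin := rfl
  rw [this]; exact LinearMap.continuous_of_finiteDimensional _

lemma isCompact_Zono {r m : ℕ} (A : Matrix (Fin r) (Fin m) ℝ) : IsCompact (Zono A) :=
  (isCompact_cube m).image (continuous_mulVec A)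

lemma convex_Zono {r m : ℕ} (A : Matrix (Fin r) (Fin m) ℝ) : Convex ℝ (Zono A) :=
  (convex_cube m).linear_image A.mulVecLin

section Slab
variable {s m : ℕ} (i0 : Fin (s+1)) (N : Matrix (Fin (s+1)) (Fin (m+1)) ℝ)

/-- split coordinates at `i0` -/
def phi : (Fin (s+1) → ℝ) → ℝ × (Fin s → ℝ) := fun z => (z i0, fun j => z (i0.succAbove j))

lemma continuous_phi : Continuous (phi i0) :=
  (continuous_apply i0).prodMk (continuous_pi fun _ => continuous_apply _)

lemma vol_phi_image (S : Set (Fin (s+1) → ℝ)) (hS : MeasurableSet S) :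
    volume (phi i0 '' S) = volume S := by
  have h1 : phi i0 = ⇑(MeasurableEquiv.piFinSuccAbove (fun _ : Fin (s+1) => ℝ) i0) := rfl
  rw [h1, show ⇑(MeasurableEquiv.piFinSuccAbove (fun _ : Fin (s+1) => ℝ) i0)
      = ⇑(MeasurableEquiv.piFinSuccAbove (fun _ : Fin (s+1) => ℝ) i0).toEquiv from rfl,
    Equiv.image_eq_preimage_symm]
  exact (MeasurePreserving.symm _
    (volume_preserving_piFinSuccAbove (fun _ : Fin (s+1) => ℝ) i0)).measure_preimage
    hS.nullMeasurableSet

/-- first coordinate of the image -/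
def gfun : (Fin m → ℝ) → ℝ := fun x => (N.submatrix id Fin.castSucc).mulVec x i0

/-- remaining coordinates -/
def hfun : (Fin m → ℝ) → Fin s → ℝ := fun x => (N.submatrix i0.succAbove Fin.castSucc).mulVec x

lemma hfun_eq (x : Fin m → ℝ) (j : Fin s) :
    hfun i0 N x j = (N.submatrix id Fin.castSucc).mulVec x (i0.succAbove j) := rfl

lemma phi_mulVec (hcol : ∀ i, N i (Fin.last m) = (Pi.single i0 1 : Fin (s+1) → ℝ) i) (xx : Fin (m+1) → ℝ) :
    phi i0 (N.mulVec xx)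
      = (gfun i0 N (xx ∘ Fin.castSucc) + xx (Fin.last m), hfun i0 N (xx ∘ Fin.castSucc)) := by
  have key : ∀ i, N.mulVec xx i
      = (N.submatrix id Fin.castSucc).mulVec (xx ∘ Fin.castSucc) i
        + (Pi.single i0 1 : Fin (s+1) → ℝ) i * xx (Fin.last m) := by
    intro i
    simp only [Matrix.mulVec, dotProduct, Fin.sum_univ_castSucc, Matrix.submatrix_apply,
      id_eq, Function.comp_apply, hcol i]
  unfold phi gfun hfun
  refine Prod.ext ?_ ?_
  · simp [key i0]
  · funext j
    show (N *ᵥ xx) (i0.succAbove j) = hfun i0 N (xx ∘ Fin.castSucc) j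
    rw [hfun_eq, key (i0.succAbove j), Pi.single_eq_of_ne (Fin.succAbove_ne i0 j)]
    ring

lemma cube_mem_iff {k : ℕ} (x : Fin k → ℝ) : x ∈ cube k ↔ ∀ i, x i ∈ Set.Icc (0:ℝ) 1 := by
  unfold cube; rw [Set.mem_univ_pi]

lemma phi_Zono_desc (hcol : ∀ i, N i (Fin.last m) = (Pi.single i0 1 : Fin (s+1) → ℝ) i) :
    phi i0 '' Zono N = {p : ℝ × (Fin s → ℝ) | ∃ x ∈ cube m, ∃ t ∈ Set.Icc (0:ℝ) 1,
      p = (gfun i0 N x + t, hfun i0 N x)} := by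
  ext p
  constructor
  · rintro ⟨z, ⟨xx, hxx, rfl⟩, rfl⟩
    refine ⟨xx ∘ Fin.castSucc, ?_, xx (Fin.last m), ?_, (phi_mulVec i0 N hcol xx).symm ▸ rfl⟩
    · rw [cube_mem_iff]; intro i; exact (cube_mem_iff xx).1 hxx _
    · exact (cube_mem_iff xx).1 hxx _
  · rintro ⟨x, hx, t, ht, rfl⟩
    refine ⟨N.mulVec (Fin.snoc x t), ⟨Fin.snoc x t, ?_, rfl⟩, ?_⟩
    · rw [cube_mem_iff]
      intro i
      refine Fin.lastCases ?_ ?_ i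
      · simpa using ht
      · intro j; simpa using (cube_mem_iff x).1 hx j
    · rw [phi_mulVec i0 N hcol]
      have h1 : (Fin.snoc x t : Fin (m+1) → ℝ) ∘ Fin.castSucc = x := by
        funext k; simp
      have h2 : (Fin.snoc x t : Fin (m+1) → ℝ) (Fin.last m) = t := by simp
      rw [h1, h2]

lemma phi_ZonoSub_desc :
    phi i0 '' Zono (N.submatrix id Fin.castSucc)
      = {p : ℝ × (Fin s → ℝ) | ∃ x ∈ cube m, p = (gfun i0 N x, hfun i0 N x)} := by
  ext p
  constructor
  · rintro ⟨z, ⟨x, hx, rfl⟩, rfl⟩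
    exact ⟨x, hx, rfl⟩
  · rintro ⟨x, hx, rfl⟩
    exact ⟨_, ⟨x, hx, rfl⟩, rfl⟩

end Slab

section Slab2
variable {s m : ℕ} (i0 : Fin (s+1)) (N : Matrix (Fin (s+1)) (Fin (m+1)) ℝ)

def sl (S : Set (ℝ × (Fin s → ℝ))) (y : Fin s → ℝ) : Set ℝ := {u | (u, y) ∈ S}

lemma vol_slice (S : Set (ℝ × (Fin s → ℝ))) (hS : MeasurableSet S) :
    volume S = ∫⁻ y, volume (sl S y) := by
  rw [Measure.volume_eq_prod, Measure.prod_apply_symm hS]; rfl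

theorem slab (hcol : ∀ i, N i (Fin.last m) = (Pi.single i0 1 : Fin (s+1) → ℝ) i) :
    volume (Zono N) = volume (Zono (N.submatrix id Fin.castSucc))
      + volume (Zono (N.submatrix i0.succAbove Fin.castSucc)) := by
  classical
  set g := gfun i0 N with hg
  set h := hfun i0 N with hh
  set W0 := N.submatrix i0.succAbove Fin.castSucc with hW0
  set N' := N.submatrix id Fin.castSucc with hN'
  have hZc : IsCompact (Zono N) := isCompact_Zono N
  have hZc' : IsCompact (Zono N') := isCompact_Zono N'
  have hphiC := continuous_phi (s := s) i0
  have hKc : IsCompact (phi i0 '' Zono N') := hZc'.image hphiC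
  have hPc : IsCompact (phi i0 '' Zono N) := hZc.image hphiC
  have hKm : MeasurableSet (phi i0 '' Zono N') := hKc.measurableSet
  have hPm := hPc.measurableSet
  have hgL : g = ⇑((LinearMap.proj i0).comp N'.mulVecLin) := rfl
  have hhL : h = ⇑(W0.mulVecLin) := rfl
  have hZW : Zono W0 = h '' cube m := rfl
  have hIcompact : ∀ y, IsCompact (g '' (cube m ∩ h ⁻¹' {y})) := by
    intro y
    refine IsCompact.image ((isCompact_cube m).inter_right ?_) ?_
    · exact IsClosed.preimage (by rw [hhL]; exact LinearMap.continuous_of_finiteDimensional _)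
        isClosed_singleton
    · rw [hgL]; exact LinearMap.continuous_of_finiteDimensional _
  have hIconvex : ∀ y, Convex ℝ (g '' (cube m ∩ h ⁻¹' {y})) := by
    intro y
    rw [hgL]
    refine Convex.linear_image (Convex.inter (convex_cube m) ?_) _
    rw [hhL]
    exact (convex_singleton y).linear_preimage _
  have hslK : ∀ y, sl (phi i0 '' Zono N') y = g '' (cube m ∩ h ⁻¹' {y}) := by
    intro y
    ext u
    constructor
    · intro hu
      have := (phi_ZonoSub_desc i0 N) ▸ hu
      obtain ⟨x, hx, hp⟩ := this
      obtain ⟨h1, h2⟩ := Prod.ext_iff.mp hp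
      exact ⟨x, ⟨hx, by simp only [Set.mem_preimage, Set.mem_singleton_iff]; exact h2.symm⟩,
        h1.symm⟩
    · rintro ⟨x, ⟨hx, hxy⟩, rfl⟩
      have hyx : h x = y := by simpa using hxy
      subst hyx
      show (g x, h x) ∈ phi i0 '' Zono N'
      rw [phi_ZonoSub_desc i0 N]
      exact ⟨x, hx, rfl⟩
  have hslP : ∀ y, sl (phi i0 '' Zono N) y = g '' (cube m ∩ h ⁻¹' {y}) + Set.Icc (0:ℝ) 1 := by
    intro y
    ext u
    constructor
    · intro hu
      have := (phi_Zono_desc i0 N hcol) ▸ hu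
      obtain ⟨x, hx, t, ht, hp⟩ := this
      obtain ⟨h1, h2⟩ := Prod.ext_iff.mp hp
      have h1' : u = g x + t := h1
      rw [h1']
      have hxmem : x ∈ cube m ∩ h ⁻¹' {y} := by
        refine ⟨hx, ?_⟩
        simp only [Set.mem_preimage, Set.mem_singleton_iff]
        exact h2.symm
      exact Set.add_mem_add ⟨x, hxmem, rfl⟩ ht
    · intro hu
      rw [Set.mem_add] at hu
      obtain ⟨a, ⟨x, ⟨hx, hxy⟩, rfl⟩, t, ht, rfl⟩ := hu
      have hyx : h x = y := by simpa using hxy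
      subst hyx
      show (g x + t, h x) ∈ phi i0 '' Zono N
      rw [phi_Zono_desc i0 N hcol]
      exact ⟨x, hx, t, ht, rfl⟩
  have hpt : ∀ y, volume (sl (phi i0 '' Zono N) y)
      = volume (sl (phi i0 '' Zono N') y) + (Zono W0).indicator 1 y := by
    intro y
    rw [hslK y, hslP y]
    by_cases hy : (cube m ∩ h ⁻¹' {y}).Nonempty
    · set I := g '' (cube m ∩ h ⁻¹' {y}) with hI
      have hIn : I.Nonempty := hy.image g
      have hIcc : I = Set.Icc (sInf I) (sSup I) :=
        eq_Icc_of_connected_compact ⟨hIn, (hIconvex y).isPreconnected⟩ (hIcompact y)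
      have hab : sInf I ≤ sSup I := Set.nonempty_Icc.mp (hIcc ▸ hIn)
      have hyW : y ∈ Zono W0 := by
        obtain ⟨x, hx, hxy⟩ := hy
        exact ⟨x, hx, hxy⟩
      rw [hIcc, Set.Icc_add_Icc hab zero_le_one, add_zero, Real.volume_Icc, Real.volume_Icc,
        Set.indicator_of_mem hyW]
      have h3 : sSup I + 1 - sInf I = (sSup I - sInf I) + 1 := by ring
      rw [h3, ENNReal.ofReal_add (sub_nonneg.2 hab) zero_le_one, ENNReal.ofReal_one]
      rfl
    · rw [Set.not_nonempty_iff_eq_empty] at hy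
      have hyW : y ∉ Zono W0 := by
        rintro ⟨x, hx, hxy⟩
        rw [Set.eq_empty_iff_forall_notMem] at hy
        exact hy x ⟨hx, hxy⟩
      rw [hy, Set.image_empty, Set.empty_add, Set.indicator_of_notMem hyW]
      simp
  have hmes : Measurable fun y => volume (sl (phi i0 '' Zono N') y) :=
    measurable_measure_prodMk_right hKm
  calc volume (Zono N) = volume (phi i0 '' Zono N) :=
        (vol_phi_image i0 _ hZc.measurableSet).symm
    _ = ∫⁻ y, volume (sl (phi i0 '' Zono N) y) := vol_slice _ hPm
    _ = ∫⁻ y, (volume (sl (phi i0 '' Zono N') y) + (Zono W0).indicator 1 y) :=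
        lintegral_congr hpt
    _ = (∫⁻ y, volume (sl (phi i0 '' Zono N') y)) + ∫⁻ y, (Zono W0).indicator 1 y :=
        lintegral_add_left hmes _
    _ = volume (Zono N') + volume (Zono W0) := by
        rw [← vol_slice _ hKm, vol_phi_image i0 _ hZc'.measurableSet,
          lintegral_indicator_one (isCompact_Zono W0).measurableSet]

end Slab2

variable {α β : Type*} [DecidableEq α] [DecidableEq β] {V : Type*} [AddCommGroup V] [Module ℝ V]

lemma indep_map (f : α ↪ β) (B : Finset α) (fam : β → V) :
    LinearIndependent ℝ (fun x : ↑(B.map f) => fam ↑x)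
      ↔ LinearIndependent ℝ (fun z : ↑B => fam (f ↑z)) := by
  let e : ↑B ≃ ↑(B.map f) := by
    refine Equiv.ofBijective (fun z => ⟨f ↑z, Finset.mem_map_of_mem f z.2⟩) ⟨?_, ?_⟩
    · intro z1 z2 h
      exact Subtype.ext (f.injective (congrArg Subtype.val h))
    · rintro ⟨x, hx⟩
      obtain ⟨z, hz, rfl⟩ := Finset.mem_map.mp hx
      exact ⟨⟨z, hz⟩, rfl⟩
  exact (linearIndependent_equiv' e rfl).symm

lemma indep_insert_map (f : α ↪ β) (B : Finset α) (b : β) (hb : b ∉ B.map f) (fam : β → V) :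
    LinearIndependent ℝ (fun x : ↑(insert b (B.map f)) => fam ↑x)
      ↔ LinearIndependent ℝ (Sum.elim (fun z : ↑B => fam (f ↑z)) (fun _ : Unit => fam b)) := by
  let e : ↑B ⊕ Unit ≃ ↑(insert b (B.map f)) := by
    refine Equiv.ofBijective
      (Sum.elim (fun z => ⟨f ↑z, Finset.mem_insert_of_mem (Finset.mem_map_of_mem f z.2)⟩)
        (fun _ => ⟨b, Finset.mem_insert_self b _⟩)) ⟨?_, ?_⟩
    · rintro (z1 | u1) (z2 | u2) h <;> simp only [Sum.elim_inl, Sum.elim_inr] at h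
      · exact congrArg Sum.inl (Subtype.ext (f.injective (congrArg Subtype.val h)))
      · exact absurd (congrArg Subtype.val h) (by
          simp only
          intro hc
          exact hb (hc ▸ Finset.mem_map_of_mem f z1.2))
      · exact absurd (congrArg Subtype.val h).symm (by
          simp only
          intro hc
          exact hb (hc ▸ Finset.mem_map_of_mem f z2.2))
      · cases u1; cases u2; rfl
    · rintro ⟨x, hx⟩
      rcases Finset.mem_insert.mp hx with rfl | hx'
      · exact ⟨Sum.inr (), rfl⟩
      · obtain ⟨z, hz, rfl⟩ := Finset.mem_map.mp hx'
        exact ⟨Sum.inl ⟨z, hz⟩, rfl⟩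
  refine (linearIndependent_equiv' e ?_).symm
  funext u
  rcases u with z | u <;> rfl

lemma indep_drop {s : ℕ} (i0 : Fin (s+1)) {ι : Type*} [Fintype ι]
    (c : ι → (Fin (s+1) → ℝ)) :
    LinearIndependent ℝ (Sum.elim c (fun _ : Unit => (Pi.single i0 1 : Fin (s+1) → ℝ)))
      ↔ LinearIndependent ℝ (fun i => (c i) ∘ i0.succAbove) := by
  classical
  rw [Fintype.linearIndependent_iff, Fintype.linearIndependent_iff]
  have ptF : ∀ (G : ι ⊕ Unit → ℝ) (w : Fin (s+1)),
      (∑ k, G k • Sum.elim c (fun _ : Unit => (Pi.single i0 1 : Fin (s+1) → ℝ)) k) w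
        = (∑ i, G (Sum.inl i) * c i w)
          + G (Sum.inr ()) * (Pi.single i0 1 : Fin (s+1) → ℝ) w := by
    intro G w
    rw [Finset.sum_apply, Fintype.sum_sum_type]
    simp [Pi.smul_apply]
  have ptg : ∀ (g : ι → ℝ) (j : Fin s),
      (∑ i, g i • ((c i) ∘ i0.succAbove)) j = ∑ i, g i * c i (i0.succAbove j) := by
    intro g j
    rw [Finset.sum_apply]
    simp
  constructor
  · intro H g hg
    have hg' : ∀ j : Fin s, ∑ i, g i * c i (i0.succAbove j) = 0 := by
      intro j
      rw [← ptg g j, hg]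
      rfl
    set G : ι ⊕ Unit → ℝ := Sum.elim g (fun _ => -∑ i, g i * c i i0) with hG
    have hsum : ∑ k, G k • Sum.elim c (fun _ : Unit => (Pi.single i0 1 : Fin (s+1) → ℝ)) k = 0 := by
      funext w
      rw [ptF G w]
      rcases eq_or_ne w i0 with rfl | hw
      · simp [hG]
      · obtain ⟨j, rfl⟩ := Fin.exists_succAbove_eq hw
        rw [Pi.single_eq_of_ne (Fin.succAbove_ne i0 j)]
        simp only [hG, Sum.elim_inl, Sum.elim_inr, mul_zero, add_zero]
        exact hg' j
    intro i
    exact H G hsum (Sum.inl i)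
  · intro H G hG
    have key : ∀ w, (∑ i, G (Sum.inl i) * c i w)
        + G (Sum.inr ()) * (Pi.single i0 1 : Fin (s+1) → ℝ) w = 0 := by
      intro w
      rw [← ptF G w, hG]
      rfl
    have hinl : ∀ i, G (Sum.inl i) = 0 := by
      refine H (fun i => G (Sum.inl i)) ?_
      funext j
      rw [ptg]
      have := key (i0.succAbove j)
      rwa [Pi.single_eq_of_ne (Fin.succAbove_ne i0 j), mul_zero, add_zero] at this
    rintro (i | u)
    · exact hinl i
    · have := key i0
      simp only [hinl, zero_mul, Finset.sum_const_zero, zero_add, Pi.single_eq_same,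
        mul_one] at this
      cases u
      exact this


section Pivot
variable {s : ℕ}

/-- column vector for the pivot transformation -/
def uvec (i0 : Fin (s+1)) (v : Fin (s+1) → ℝ) (a : ℝ) : Fin (s+1) → ℝ :=
  fun i => if i = i0 then a - 1 else -(v i) * a

/-- the pivot matrix `L` with `L v = e_{i0}` -/
def Lmat (i0 : Fin (s+1)) (v : Fin (s+1) → ℝ) (a : ℝ) : Matrix (Fin (s+1)) (Fin (s+1)) ℝ :=
  1 + Matrix.replicateCol Unit (uvec i0 v a) * Matrix.replicateRow Unit (Pi.single i0 1 : Fin (s+1) → ℝ)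

lemma Lmat_det (i0 : Fin (s+1)) (v : Fin (s+1) → ℝ) (a : ℝ) :
    (Lmat i0 v a).det = a := by
  rw [Lmat, Matrix.det_one_add_replicateCol_mul_replicateRow]
  have : (Pi.single i0 1 : Fin (s+1) → ℝ) ⬝ᵥ uvec i0 v a = uvec i0 v a i0 := by
    simp [dotProduct, Pi.single_apply]
  rw [this]
  simp [uvec]

lemma Lmat_mulVec (i0 : Fin (s+1)) (v : Fin (s+1) → ℝ) (a : ℝ) (z : Fin (s+1) → ℝ) :
    (Lmat i0 v a).mulVec z = fun i => z i + uvec i0 v a i * z i0 := by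
  funext i
  rw [Lmat, Matrix.add_mulVec, Matrix.one_mulVec]
  have : ((Matrix.replicateCol Unit (uvec i0 v a) * Matrix.replicateRow Unit (Pi.single i0 1 : Fin (s+1) → ℝ)).mulVec z) i
      = uvec i0 v a i * z i0 := by
    simp [Matrix.mulVec, dotProduct, Matrix.mul_apply, Pi.single_apply, mul_ite,
      Finset.sum_ite_eq']
  simp [this]

variable {m : ℕ} (A : Matrix (Fin (s+1)) (Fin (m+1)) ℝ) (i0 : Fin (s+1))

/-- contraction of A at pivot (i0, last) -/
def Wmat (a : ℝ) : Matrix (Fin s) (Fin m) ℝ :=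
  Matrix.of fun j k => A (i0.succAbove j) (Fin.castSucc k)
    - A (i0.succAbove j) (Fin.last m) * a * A i0 (Fin.castSucc k)

/-- shorthand for L applied to A -/
def LA (a : ℝ) : Matrix (Fin (s+1)) (Fin (m+1)) ℝ :=
  Lmat i0 (fun i => A i (Fin.last m)) a * A

lemma LA_entry (a : ℝ) (i : Fin (s+1)) (j : Fin (m+1)) :
    LA A i0 a i j = A i j + uvec i0 (fun i => A i (Fin.last m)) a i * A i0 j := by
  have h1 : LA A i0 a i j
      = ((Lmat i0 (fun i => A i (Fin.last m)) a).mulVec (fun k => A k j)) i := by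
    simp [LA, Matrix.mul_apply, Matrix.mulVec, dotProduct]
  rw [h1, Lmat_mulVec]

lemma LA_col_last (a : ℝ) (ha : A i0 (Fin.last m) = a) (ha2 : a * a = 1) (i : Fin (s+1)) :
    LA A i0 a i (Fin.last m) = (Pi.single i0 1 : Fin (s+1) → ℝ) i := by
  rw [LA_entry, uvec]
  rcases eq_or_ne i i0 with rfl | hi
  · rw [if_pos rfl, ha, Pi.single_eq_same]
    have h3 : a + (a - 1) * a = a * a := by ring
    rw [h3, ha2]
  · rw [if_neg hi, Pi.single_eq_of_ne hi, ha]
    have h3 : A i (Fin.last m) + -A i (Fin.last m) * a * a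
        = A i (Fin.last m) * (1 - a * a) := by ring
    rw [h3, ha2]
    ring

lemma LA_sub_castSucc (a : ℝ) :
    (LA A i0 a).submatrix id Fin.castSucc
      = Lmat i0 (fun i => A i (Fin.last m)) a * (A.submatrix id Fin.castSucc) := by
  ext i k
  simp [LA, Matrix.mul_apply]

lemma LA_sub_succAbove (a : ℝ) (ha : A i0 (Fin.last m) = a) (ha2 : a * a = 1) (j : Fin s)
    (k : Fin (m+1)) :
    LA A i0 a (i0.succAbove j) k = A (i0.succAbove j) k - A (i0.succAbove j) (Fin.last m) * a * A i0 k := by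
  rw [LA_entry, uvec, if_neg (Fin.succAbove_ne i0 j)]
  ring

lemma LA_W (a : ℝ) (ha : A i0 (Fin.last m) = a) (ha2 : a * a = 1) :
    (LA A i0 a).submatrix i0.succAbove Fin.castSucc = Wmat A i0 a := by
  ext j k
  rw [Matrix.submatrix_apply, LA_sub_succAbove A i0 a ha ha2]
  rfl

end Pivot


/-- Basis predicate. -/
def Bases {r m : ℕ} (A : Matrix (Fin r) (Fin m) ℝ) : Set (Finset (Fin m)) :=
  {B | B.card = r ∧ LinearIndependent ℝ (fun e : B => fun i => A i (e : Fin m))}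

section Schur
variable {s m : ℕ} (M : Matrix (Fin (s+1)) (Fin (m+1)) ℝ) (i0 : Fin (s+1))

theorem schur_det {a : ℝ} (ha : M i0 (Fin.last m) = a) (ha2 : a * a = 1)
    {ι : Type} [Fintype ι] [DecidableEq ι] (f : ι → Fin s) (g : ι → Fin m) :
    (M.submatrix (Sum.elim (fun _ : Unit => i0) (i0.succAbove ∘ f))
        (Sum.elim (fun _ : Unit => Fin.last m) (Fin.castSucc ∘ g))).det
      = a * ((Wmat M i0 a).submatrix f g).det := by
  have ha0 : a ≠ 0 := by rintro rfl; simp at ha2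
  set P : Matrix Unit Unit ℝ := Matrix.of fun _ _ => a with hP
  have hPP : P * P = 1 := by
    ext i j
    simp [hP, Matrix.mul_apply, Matrix.one_apply, ha2]
  letI : Invertible P := ⟨P, hPP, hPP⟩
  have hblocks : M.submatrix (Sum.elim (fun _ : Unit => i0) (i0.succAbove ∘ f))
        (Sum.elim (fun _ : Unit => Fin.last m) (Fin.castSucc ∘ g)) =
      Matrix.fromBlocks P (Matrix.of fun _ j => M i0 (Fin.castSucc (g j)))
        (Matrix.of fun i _ => M (i0.succAbove (f i)) (Fin.last m))
        (Matrix.of fun i j => M (i0.succAbove (f i)) (Fin.castSucc (g j))) := by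
    ext i j
    rcases i with i | i <;> rcases j with j | j <;> simp [hP, ha]
  rw [hblocks, Matrix.det_fromBlocks₁₁]
  have hdetP : P.det = a := by simp [hP]
  have hinv : (⅟P : Matrix Unit Unit ℝ) = P := rfl
  rw [hdetP, hinv]
  congr 2
  ext i j
  simp [Wmat, hP, Matrix.mul_apply, mul_comm, mul_assoc, mul_left_comm]

theorem Wmat_TU {a : ℝ} (ha : M i0 (Fin.last m) = a) (ha1 : a = 1 ∨ a = -1)
    (hTU : M.IsTotallyUnimodular) : (Wmat M i0 a).IsTotallyUnimodular := by
  classical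
  have ha2 : a * a = 1 := by rcases ha1 with rfl | rfl <;> norm_num
  rw [Matrix.isTotallyUnimodular_iff]
  intro k f g
  have hdet := schur_det M i0 ha ha2 f g
  have hmem := (Matrix.isTotallyUnimodular_iff_fintype.{0} M).mp hTU (Unit ⊕ Fin k)
    (Sum.elim (fun _ => i0) (i0.succAbove ∘ f))
    (Sum.elim (fun _ => Fin.last m) (Fin.castSucc ∘ g))
  rw [hdet] at hmem
  obtain ⟨sg, hsg⟩ := hmem
  rcases ha1 with rfl | rfl
  · exact ⟨sg, by rw [hsg, one_mul]⟩
  · refine ⟨-sg, ?_⟩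
    have : ((-sg : SignType) : ℝ) = -(sg : ℝ) := by
      cases sg <;> simp
    rw [this, hsg]
    ring
end Schur

section VolMul

lemma vol_Zono_mul {r m' : ℕ} (L : Matrix (Fin r) (Fin r) ℝ) (M : Matrix (Fin r) (Fin m') ℝ) :
    volume (Zono (L * M)) = ENNReal.ofReal |L.det| * volume (Zono M) := by
  have himg : Zono (L * M) = Matrix.toLin' L '' Zono M := by
    unfold Zono
    rw [Set.image_image]
    apply congrFun
    apply congrArg
    funext x
    rw [← Matrix.mulVec_mulVec]
    rfl
  rw [himg, Measure.addHaar_image_linearMap, LinearMap.det_toLin']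

lemma mulVec_split {r m : ℕ} (A : Matrix (Fin r) (Fin (m+1)) ℝ) (x : Fin (m+1) → ℝ) :
    A.mulVec x = (A.submatrix id Fin.castSucc).mulVec (x ∘ Fin.castSucc)
      + x (Fin.last m) • (fun i => A i (Fin.last m)) := by
  funext i
  simp only [Matrix.mulVec, dotProduct, Fin.sum_univ_castSucc, Pi.add_apply, Pi.smul_apply,
    Matrix.submatrix_apply, id_eq, Function.comp_apply, smul_eq_mul]
  ring

end VolMul

lemma count_step {s m : ℕ} (A : Matrix (Fin (s+1)) (Fin (m+1)) ℝ) (i0 : Fin (s+1))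
    (ha2 : A i0 (Fin.last m) * A i0 (Fin.last m) = 1) :
    (Bases A).ncard = (Bases (A.submatrix id Fin.castSucc)).ncard
      + (Bases (Wmat A i0 (A i0 (Fin.last m)))).ncard := by
  classical
  set a := A i0 (Fin.last m) with haa
  set A' := A.submatrix id Fin.castSucc with hA'
  set W := Wmat A i0 a with hW
  set L := Lmat i0 (fun i => A i (Fin.last m)) a with hLdef
  have hLAeq : L * A = LA A i0 a := rfl
  have hLdet : IsUnit L.det := by
    rw [hLdef, Lmat_det]
    refine isUnit_iff_ne_zero.mpr (fun h => ?_)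
    rw [h] at ha2; simp at ha2
  have hker : LinearMap.ker (Matrix.toLin' L) = ⊥ := by
    rw [LinearMap.ker_eq_bot]
    have : Function.Injective L.mulVec :=
      Matrix.mulVec_injective_iff_isUnit.mpr ((Matrix.isUnit_iff_isUnit_det L).mpr hLdet)
    intro x y hxy
    exact this (by simpa [Matrix.toLin'_apply] using hxy)
  have hLind : ∀ (S : Finset (Fin (m+1))),
      (LinearIndependent ℝ (fun x : ↑S => fun i => A i (x : Fin (m+1)))
        ↔ LinearIndependent ℝ (fun x : ↑S => fun i => (L * A) i (x : Fin (m+1)))) := by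
    intro S
    have hcomp : (fun x : ↑S => fun i => (L * A) i (x : Fin (m+1)))
        = ⇑(Matrix.toLin' L) ∘ (fun x : ↑S => fun i => A i (x : Fin (m+1))) := by
      funext x
      funext i
      simp [Matrix.toLin'_apply, Matrix.mul_apply, Matrix.mulVec, dotProduct]
    rw [hcomp]
    exact (LinearMap.linearIndependent_iff _ hker).symm
  have h1 : ∀ B' : Finset (Fin m), (B'.map Fin.castSuccEmb ∈ Bases A ↔ B' ∈ Bases A') := by
    intro B'
    show _ ∧ _ ↔ _ ∧ _
    rw [Finset.card_map]
    exact and_congr Iff.rfl (indep_map Fin.castSuccEmb B' (fun e => fun i => A i e))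
  have hblast : ∀ B₀ : Finset (Fin m), Fin.last m ∉ B₀.map Fin.castSuccEmb := by
    intro B₀ hmem
    obtain ⟨z, hz, hzz⟩ := Finset.mem_map.mp hmem
    exact absurd hzz (Fin.castSucc_lt_last z).ne
  have h2 : ∀ B₀ : Finset (Fin m),
      (insert (Fin.last m) (B₀.map Fin.castSuccEmb) ∈ Bases A ↔ B₀ ∈ Bases W) := by
    intro B₀
    show _ ∧ _ ↔ _ ∧ _
    rw [Finset.card_insert_of_notMem (hblast B₀), Finset.card_map]
    refine and_congr (by omega) ?_
    have I1 := hLind (insert (Fin.last m) (B₀.map Fin.castSuccEmb))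
    have I2 := indep_insert_map Fin.castSuccEmb B₀ (Fin.last m) (hblast B₀)
      (fun e => fun i => (L * A) i e)
    have heq : (Sum.elim (fun z : ↑B₀ => fun i => (L * A) i (Fin.castSuccEmb ↑z))
          (fun _ : Unit => fun i => (L * A) i (Fin.last m)))
        = Sum.elim (fun z : ↑B₀ => fun i => (L * A) i (Fin.castSuccEmb ↑z))
          (fun _ : Unit => (Pi.single i0 1 : Fin (s+1) → ℝ)) := by
      funext u
      rcases u with z | u
      · rfl
      · funext i
        exact (hLAeq ▸ (LA_col_last A i0 a rfl ha2 i) : (L * A) i (Fin.last m) = _)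
    have I2' : LinearIndependent ℝ (Sum.elim (fun z : ↑B₀ => fun i => (L * A) i (Fin.castSuccEmb ↑z))
          (fun _ : Unit => fun i => (L * A) i (Fin.last m)))
        ↔ LinearIndependent ℝ (Sum.elim (fun z : ↑B₀ => fun i => (L * A) i (Fin.castSuccEmb ↑z))
          (fun _ : Unit => (Pi.single i0 1 : Fin (s+1) → ℝ))) :=
      iff_of_eq (congrArg (fun f : (↑B₀ ⊕ Unit) → (Fin (s+1) → ℝ) => LinearIndependent ℝ f) heq)
    have I3 := indep_drop i0 (fun z : ↑B₀ => fun i => (L * A) i (Fin.castSuccEmb ↑z))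
    have heq2 : (fun z : ↑B₀ => (fun i => (L * A) i (Fin.castSuccEmb ↑z)) ∘ i0.succAbove)
        = (fun z : ↑B₀ => fun j => W j ↑z) := by
      funext z
      funext j
      show (L * A) (i0.succAbove j) (Fin.castSucc ↑z) = W j ↑z
      rw [hLAeq, LA_sub_succAbove A i0 a rfl ha2]
      rfl
    have I4 : LinearIndependent ℝ (fun z : ↑B₀ => (fun i => (L * A) i (Fin.castSuccEmb ↑z)) ∘ i0.succAbove)
        ↔ LinearIndependent ℝ (fun z : ↑B₀ => fun j => W j ↑z) :=
      iff_of_eq (congrArg (fun f : ↑B₀ → (Fin s → ℝ) => LinearIndependent ℝ f) heq2)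
    exact I1.trans (I2.trans (I2'.trans (I3.trans I4)))
  have hinj1 : Function.Injective (fun B' : Finset (Fin m) => B'.map Fin.castSuccEmb) :=
    fun a b h => Finset.map_injective _ h
  have hinj2 : Function.Injective
      (fun B₀ : Finset (Fin m) => insert (Fin.last m) (B₀.map Fin.castSuccEmb)) := by
    intro a b h
    have h' := congrArg (fun S => S.erase (Fin.last m)) h
    simp only [Finset.erase_insert (hblast a), Finset.erase_insert (hblast b)] at h'
    exact Finset.map_injective _ h'
  have hcov : Bases A = (fun B' : Finset (Fin m) => B'.map Fin.castSuccEmb) '' Bases A'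
      ∪ (fun B₀ : Finset (Fin m) => insert (Fin.last m) (B₀.map Fin.castSuccEmb)) '' Bases W := by
    apply Set.Subset.antisymm
    · intro B hB
      by_cases hl : Fin.last m ∈ B
      · have hsub : B.erase (Fin.last m) ⊆ Finset.univ.map Fin.castSuccEmb := by
          intro x hx
          obtain ⟨y, hy⟩ := Fin.exists_castSucc_eq.mpr (Finset.ne_of_mem_erase hx)
          exact Finset.mem_map.mpr ⟨y, Finset.mem_univ y, hy⟩
        obtain ⟨B₀, _, hB₀⟩ := Finset.subset_map_iff.mp hsub
        have hBeq : B = insert (Fin.last m) (B₀.map Fin.castSuccEmb) := by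
          rw [← hB₀, Finset.insert_erase hl]
        right
        exact ⟨B₀, (h2 B₀).mp (hBeq ▸ hB), hBeq.symm⟩
      · have hsub : B ⊆ Finset.univ.map Fin.castSuccEmb := by
          intro x hx
          obtain ⟨y, hy⟩ := Fin.exists_castSucc_eq.mpr (fun hxx => hl (hxx ▸ hx))
          exact Finset.mem_map.mpr ⟨y, Finset.mem_univ y, hy⟩
        obtain ⟨B', _, hB'⟩ := Finset.subset_map_iff.mp hsub
        left
        exact ⟨B', (h1 B').mp (hB' ▸ hB), hB'.symm⟩
    · rintro B (⟨B', hB', rfl⟩ | ⟨B₀, hB₀, rfl⟩)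
      · exact (h1 B').mpr hB'
      · exact (h2 B₀).mpr hB₀
  have hdisj : Disjoint ((fun B' : Finset (Fin m) => B'.map Fin.castSuccEmb) '' Bases A')
      ((fun B₀ : Finset (Fin m) => insert (Fin.last m) (B₀.map Fin.castSuccEmb)) '' Bases W) := by
    rw [Set.disjoint_left]
    rintro B ⟨B', _, rfl⟩ ⟨B₀, _, hB₀⟩
    have hB₀' : insert (Fin.last m) (B₀.map Fin.castSuccEmb) = B'.map Fin.castSuccEmb := hB₀
    exact hblast B' (hB₀' ▸ Finset.mem_insert_self (Fin.last m) (B₀.map Fin.castSuccEmb))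
  rw [hcov, Set.ncard_union_eq hdisj (Set.toFinite _) (Set.toFinite _),
    Set.ncard_image_of_injective _ hinj1, Set.ncard_image_of_injective _ hinj2]


section Main

lemma bases_del {r m : ℕ} (A : Matrix (Fin r) (Fin (m+1)) ℝ) (B' : Finset (Fin m)) :
    B'.map Fin.castSuccEmb ∈ Bases A ↔ B' ∈ Bases (A.submatrix id Fin.castSucc) := by
  show _ ∧ _ ↔ _ ∧ _
  rw [Finset.card_map]
  exact and_congr Iff.rfl (indep_map Fin.castSuccEmb B' (fun e => fun i => A i e))

theorem key : ∀ (m r : ℕ) (A : Matrix (Fin r) (Fin m) ℝ), A.IsTotallyUnimodular →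
    volume (Zono A) = ((Bases A).ncard : ENNReal) := by
  intro m
  induction m with
  | zero =>
    intro r A _
    have hcube : cube 0 = Set.univ := by
      ext x; simp [cube]
    have hZ : Zono A = {(0 : Fin r → ℝ)} := by
      unfold Zono
      rw [hcube]
      apply Set.Subset.antisymm
      · rintro z ⟨x, -, rfl⟩
        have : A.mulVec x = 0 := by
          funext i
          simp [Matrix.mulVec, dotProduct]
        simp [this]
      · rintro z hz
        rw [Set.mem_singleton_iff] at hz
        refine ⟨0, Set.mem_univ 0, ?_⟩
        rw [hz]
        funext i
        simp [Matrix.mulVec, dotProduct]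
    rcases r with _ | t
    · have hZu : Zono A = Set.univ := by
        rw [hZ]
        apply Set.Subset.antisymm (Set.subset_univ _)
        intro z _
        rw [Set.mem_singleton_iff]
        funext i
        exact Fin.elim0 i
      have hvol : volume (Zono A) = 1 := by
        have hu : (Set.univ : Set (Fin 0 → ℝ)) = Set.pi Set.univ (fun _ => Set.univ) :=
          (Set.pi_univ _).symm
        rw [hZu, hu, volume_pi_pi]
        simp
      have hB : Bases A = {(∅ : Finset (Fin 0))} := by
        apply Set.Subset.antisymm
        · intro B _
          rw [Set.mem_singleton_iff]
          exact Finset.eq_empty_of_isEmpty B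
        · intro B hBm
          rw [Set.mem_singleton_iff] at hBm
          subst hBm
          exact ⟨rfl, linearIndependent_empty_type⟩
      rw [hvol, hB, Set.ncard_singleton]
      simp
    · have hvol : volume (Zono A) = 0 := by
        rw [hZ]
        have hbot : ({(0 : Fin (t+1) → ℝ)} : Set _)
            = ((⊥ : Submodule ℝ (Fin (t+1) → ℝ)) : Set _) := by
          simp
        rw [hbot]
        exact Measure.addHaar_submodule volume ⊥ bot_ne_top
      have hB : Bases A = ∅ := by
        rw [Set.eq_empty_iff_forall_notMem]
        intro B hBm
        have hc : B.card = t+1 := hBm.1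
        rw [Finset.eq_empty_of_isEmpty B] at hc
        simp at hc
      rw [hvol, hB]
      simp
  | succ m IH =>
    intro r A hTU
    by_cases hv : (fun i => A i (Fin.last m)) = 0
    · -- last column zero
      have hTU' := hTU.submatrix id Fin.castSucc
      have hZeq : Zono A = Zono (A.submatrix id Fin.castSucc) := by
        unfold Zono
        apply Set.Subset.antisymm
        · rintro z ⟨x, hx, rfl⟩
          refine ⟨x ∘ Fin.castSucc, ?_, ?_⟩
          · intro i _
            exact hx (Fin.castSucc i) (Set.mem_univ _)
          · rw [mulVec_split, hv]
            simp
        · rintro z ⟨x, hx, rfl⟩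
          refine ⟨Fin.snoc x 0, ?_, ?_⟩
          · intro i _
            refine Fin.lastCases ?_ ?_ i
            · simp
            · intro j
              simpa using hx j (Set.mem_univ _)
          · rw [mulVec_split, hv]
            have h1 : (Fin.snoc x (0:ℝ) : Fin (m+1) → ℝ) ∘ Fin.castSucc = x := by
              funext k; simp
            rw [h1]
            simp
      have hBeq : Bases A = (fun B' : Finset (Fin m) => B'.map Fin.castSuccEmb)
          '' Bases (A.submatrix id Fin.castSucc) := by
        apply Set.Subset.antisymm
        · intro B hB
          have hl : Fin.last m ∉ B := by
            intro hl
            have := hB.2.ne_zero ⟨Fin.last m, hl⟩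
            apply this
            have : (fun i => A i (Fin.last m)) = 0 := hv
            funext i
            exact congrFun this i
          have hsub : B ⊆ Finset.univ.map Fin.castSuccEmb := by
            intro x hx
            obtain ⟨y, hy⟩ := Fin.exists_castSucc_eq.mpr (fun hxx => hl (hxx ▸ hx))
            exact Finset.mem_map.mpr ⟨y, Finset.mem_univ y, hy⟩
          obtain ⟨B', -, hB'⟩ := Finset.subset_map_iff.mp hsub
          exact ⟨B', (bases_del A B').mp (hB' ▸ hB), hB'.symm⟩
        · rintro B ⟨B', hB', rfl⟩
          exact (bases_del A B').mpr hB'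
      rw [hZeq, hBeq, Set.ncard_image_of_injective _
        (fun a b h => Finset.map_injective Fin.castSuccEmb h)]
      exact IH r (A.submatrix id Fin.castSucc) hTU'
    · -- last column nonzero; r must be positive
      rcases r with _ | s
      · exact absurd (funext fun i => Fin.elim0 i) hv
      obtain ⟨i0, hi0⟩ := Function.ne_iff.mp hv
      set a := A i0 (Fin.last m) with haa
      have hi0' : a ≠ 0 := hi0
      have ha1 : a = 1 ∨ a = -1 := by
        obtain ⟨sg, hsg⟩ := hTU.apply i0 (Fin.last m)
        have hsg' : a = (sg : ℝ) := by rw [haa, ← hsg]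
        cases sg with
        | zero => exact absurd (by simpa using hsg') hi0'
        | pos => left; simpa using hsg'
        | neg => right; simpa using hsg'
      have ha2 : a * a = 1 := by rcases ha1 with h | h <;> rw [h] <;> norm_num
      set L := Lmat i0 (fun i => A i (Fin.last m)) a with hLdef
      have hLdet : L.det = a := Lmat_det i0 _ a
      have habs : ENNReal.ofReal |L.det| = 1 := by
        rw [hLdet]
        rcases ha1 with h | h <;> rw [h] <;> norm_num
      have hLAeq : L * A = LA A i0 a := rfl
      have hTU' := hTU.submatrix id Fin.castSucc
      have hTUW := Wmat_TU A i0 rfl ha1 hTU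
      have hslab := slab i0 (L * A) (by
        intro i
        rw [hLAeq]
        exact LA_col_last A i0 a rfl ha2 i)
      rw [hLAeq, LA_sub_castSucc, LA_W A i0 a rfl ha2, ← hLAeq] at hslab
      have hv1 : volume (Zono (L * A)) = volume (Zono A) := by
        rw [vol_Zono_mul, habs, one_mul]
      have hv2 : volume (Zono (Lmat i0 (fun i => A i (Fin.last m)) a
          * (A.submatrix id Fin.castSucc))) = volume (Zono (A.submatrix id Fin.castSucc)) := by
        rw [← hLdef, vol_Zono_mul, habs, one_mul]
      have hcount := count_step A i0 ha2
      rw [← hv1, hslab, hv2, IH (s+1) (A.submatrix id Fin.castSucc) hTU',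
        IH s (Wmat A i0 a) hTUW, hcount]
      push_cast
      rfl

end Main

end ZonoVol

end

open ZonoVol in
/-- The volume of the unimodular zonotope `Z_A` equals the number of bases of `A`
(equivalently, `vol(Z_A) = T_M(1,1)`, the number of bases of the regular matroid `M`). -/
theorem stmt11 {r m : ℕ} (A : Matrix (Fin r) (Fin m) ℤ)
    (hTU : A.IsTotallyUnimodular) (hrank : (A.map ((↑) : ℤ → ℝ)).rank = r) :
    MeasureTheory.volume {z : Fin r → ℝ | ∃ x : Fin m → ℝ,
        (∀ e, x e ∈ Set.Icc (0 : ℝ) 1) ∧ z = (A.map ((↑) : ℤ → ℝ)).mulVec x} =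
    (Set.ncard {B : Finset (Fin m) | B.card = r ∧
        LinearIndependent ℝ (fun e : B => fun i => (A i (e : Fin m) : ℝ)) ∧
        Submodule.span ℝ (Set.range (fun e : B => fun i => (A i (e : Fin m) : ℝ))) = ⊤} :
      ENNReal) := by
  classical
  have hTUr : (A.map ((↑) : ℤ → ℝ)).IsTotallyUnimodular := by
    rw [Matrix.isTotallyUnimodular_iff] at hTU ⊢
    intro k f g
    obtain ⟨sg, hs⟩ := hTU k f g
    use sg
    have h2 : (A.map ((↑) : ℤ → ℝ)).submatrix f g = (A.submatrix f g).map ((↑) : ℤ → ℝ) := rfl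
    have h3 : ((A.submatrix f g).map ((↑) : ℤ → ℝ)).det = (((A.submatrix f g).det : ℤ) : ℝ) :=
      ((Int.castRingHom ℝ).map_det _).symm
    rw [h2, h3, ← hs]
    cases sg <;> simp
  have hset : {z : Fin r → ℝ | ∃ x : Fin m → ℝ,
      (∀ e, x e ∈ Set.Icc (0 : ℝ) 1) ∧ z = (A.map ((↑) : ℤ → ℝ)).mulVec x}
      = Zono (A.map ((↑) : ℤ → ℝ)) := by
    ext z
    constructor
    · rintro ⟨x, hx, rfl⟩
      exact ⟨x, fun i _ => hx i, rfl⟩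
    · rintro ⟨x, hx, rfl⟩
      exact ⟨x, fun i => hx i (Set.mem_univ i), rfl⟩
  have hbset : {B : Finset (Fin m) | B.card = r ∧
        LinearIndependent ℝ (fun e : B => fun i => (A i (e : Fin m) : ℝ)) ∧
        Submodule.span ℝ (Set.range (fun e : B => fun i => (A i (e : Fin m) : ℝ))) = ⊤}
      = Bases (A.map ((↑) : ℤ → ℝ)) := by
    ext B
    constructor
    · rintro ⟨h1, h2, h3⟩
      exact ⟨h1, h2⟩
    · rintro ⟨h1, h2⟩
      refine ⟨h1, h2, ?_⟩
      rcases Nat.eq_zero_or_pos r with rfl | hr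
      · rw [eq_top_iff]
        intro x _
        have hx0 : x = 0 := Subsingleton.elim x 0
        rw [hx0]
        exact Submodule.zero_mem _
      · have hne : B.Nonempty := Finset.card_pos.mp (h1 ▸ hr)
        haveI : Nonempty ↑B := Finset.nonempty_coe_sort.mpr hne
        apply h2.span_eq_top_of_card_eq_finrank
        rw [Fintype.card_coe, h1, Module.finrank_fin_fun]
  rw [hset, hbset]
  exact key m r _ hTUr
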